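/- Let q : ℕ → ℝ be non-increasing and non-negative with q 0 > 0, Q n = ∑_{k<n} q k, and set π_k = (Q(2^k) - Q(2^{k-1}))/Q(2^{k-1}). Suppose π_k → 0. Define δ(l,k) = max{π_s : k−l ≤ s ≤ k} for 0 ≤ l < k, and γ_k as the least l with δ(l+1,k) > 1/(l+1) if such l < k exists, else γ_k = ⌊k/2⌋. Then there exists a constant c > 0 such that Q(2^{k−s}) ≥ c · Q(2^k) for all s with 1 ≤ s ≤ γ_k and all sufficiently large k. -/

import Mathlib

open Filter

/-- δ(l,k) = max of π over s ∈ [k−l, k]. -/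
noncomputable def paperDelta (π : ℕ → ℝ) (l k : ℕ) : ℝ :=
  Finset.sup' (Finset.Icc (k - l) k)
    ⟨k, Finset.mem_Icc.mpr ⟨Nat.sub_le _ _, le_refl k⟩⟩ π

-- γ_k: the least l < k with δ(l+1,k) > 1/(l+1), if one exists; otherwise ⌊k/2⌋.
open Classical in
noncomputable def paperGamma (π : ℕ → ℝ) (k : ℕ) : ℕ :=
  if h : ∃ l, l < k ∧ 1 / ((l : ℝ) + 1) < paperDelta π (l + 1) k then Nat.find h
  else k / 2

theorem stmt_6 (q : ℕ → ℝ) (hq : Antitone q) (hq0 : ∀ k, 0 ≤ q k) (hq0' : 0 < q 0)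
    (Q : ℕ → ℝ) (hQ : ∀ n, Q n = ∑ k ∈ Finset.range n, q k)
    (π : ℕ → ℝ) (hπ : ∀ k, π k = (Q (2 ^ k) - Q (2 ^ (k - 1))) / Q (2 ^ (k - 1)))
    (hπ0 : Tendsto π atTop (nhds 0)) :
    ∃ c : ℝ, 0 < c ∧ ∃ K : ℕ, ∀ k ≥ K, ∀ s : ℕ, 1 ≤ s → s ≤ paperGamma π k →
      c * Q (2 ^ k) ≤ Q (2 ^ (k - s)) := by
  have hQpos : ∀ m : ℕ, 0 < Q (2 ^ m) := by
    intro m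
    rw [hQ]
    have h1 : 1 ≤ 2 ^ m := Nat.one_le_two_pow
    calc (0:ℝ) < q 0 := hq0'
      _ = ∑ k ∈ Finset.range 1, q k := by simp
      _ ≤ ∑ k ∈ Finset.range (2 ^ m), q k :=
          Finset.sum_le_sum_of_subset_of_nonneg
            (Finset.range_subset_range.mpr h1) (fun i _ _ => hq0 i)
  have hQmono : ∀ a b : ℕ, a ≤ b → Q (2 ^ a) ≤ Q (2 ^ b) := by
    intro a b hab
    rw [hQ, hQ]
    exact Finset.sum_le_sum_of_subset_of_nonneg
      (Finset.range_subset_range.mpr (Nat.pow_le_pow_right (by norm_num) hab))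
      (fun i _ _ => hq0 i)
  have hπnn : ∀ j, 0 ≤ π j := by
    intro j
    rw [hπ j]
    apply div_nonneg _ (hQpos (j - 1)).le
    have := hQmono (j - 1) j (Nat.sub_le _ _)
    linarith
  have hid : ∀ j : ℕ, 1 ≤ j → Q (2 ^ j) = (1 + π j) * Q (2 ^ (j - 1)) := by
    intro j hj
    have hne : Q (2 ^ (j - 1)) ≠ 0 := (hQpos (j - 1)).ne'
    rw [hπ j]
    field_simp
    ring
  refine ⟨1 / 3, by norm_num, 0, ?_⟩
  intro k _ s hs1 hsγ
  have key : s < k ∧ paperDelta π s k ≤ 1 / (s : ℝ) := by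
    have hcast : ((s - 1 : ℕ) : ℝ) + 1 = (s : ℝ) := by
      have : (s : ℝ) ≥ 1 := by exact_mod_cast hs1
      push_cast [Nat.cast_sub hs1]
      ring
    have hsucc : s - 1 + 1 = s := by omega
    unfold paperGamma at hsγ
    split_ifs at hsγ with h
    · have hfind := Nat.find_spec h
      have hsk : s < k := by omega
      refine ⟨hsk, ?_⟩
      have hmin := Nat.find_min h (show s - 1 < Nat.find h by omega)
      push_neg at hmin
      have h2 := hmin (by omega)
      rw [hsucc, hcast] at h2
      exact h2
    · push_neg at h
      have hsk : s < k := by omega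
      refine ⟨hsk, ?_⟩
      have h2 := h (s - 1) (by omega)
      rw [hsucc, hcast] at h2
      exact h2
  obtain ⟨hsk, hδ⟩ := key
  have hπle : ∀ j ∈ Finset.Icc (k - s) k, π j ≤ 1 / (s : ℝ) := by
    intro j hj
    exact le_trans (Finset.le_sup' π hj) hδ
  have hsR : (0 : ℝ) < (s : ℝ) := by exact_mod_cast (by omega : 0 < s)
  have aux : ∀ t, t ≤ s → Q (2 ^ k) ≤ Real.exp ((t : ℝ) / s) * Q (2 ^ (k - t)) := by
    intro t
    induction t with
    | zero => intro _; simp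
    | succ t ih =>
      intro ht
      have h1 := ih (by omega)
      have hkt : 1 ≤ k - t := by omega
      have hid' := hid (k - t) hkt
      have hsub : k - t - 1 = k - (t + 1) := by omega
      rw [hsub] at hid'
      have hπb : π (k - t) ≤ 1 / (s : ℝ) :=
        hπle _ (Finset.mem_Icc.mpr ⟨by omega, by omega⟩)
      have hpos := hQpos (k - (t + 1))
      have step : Q (2 ^ (k - t)) ≤ Real.exp (1 / (s : ℝ)) * Q (2 ^ (k - (t + 1))) := by
        rw [hid']
        have hb : (1 : ℝ) + π (k - t) ≤ Real.exp (1 / (s : ℝ)) := by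
          have := Real.add_one_le_exp (1 / (s : ℝ))
          linarith
        exact mul_le_mul_of_nonneg_right hb hpos.le
      calc Q (2 ^ k) ≤ Real.exp ((t : ℝ) / s) * Q (2 ^ (k - t)) := h1
        _ ≤ Real.exp ((t : ℝ) / s) * (Real.exp (1 / (s : ℝ)) * Q (2 ^ (k - (t + 1)))) :=
            mul_le_mul_of_nonneg_left step (Real.exp_nonneg _)
        _ = Real.exp (((t : ℕ) + 1 : ℝ) / s) * Q (2 ^ (k - (t + 1))) := by
            rw [← mul_assoc, ← Real.exp_add]
            congr 1
            field_simp
        _ = Real.exp (((t + 1 : ℕ) : ℝ) / s) * Q (2 ^ (k - (t + 1))) := by push_cast; ring_nf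
  have hfin := aux s le_rfl
  rw [div_self hsR.ne'] at hfin
  have hexp3 : Real.exp 1 ≤ 3 := by
    have := Real.exp_one_lt_d9
    linarith
  have h3 : Q (2 ^ k) ≤ 3 * Q (2 ^ (k - s)) :=
    hfin.trans (mul_le_mul_of_nonneg_right hexp3 (hQpos _).le)
  linarith
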